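/- arXiv:1210.3012 — 2 statements merged into one kernel-verified Lean document; each statement's English description precedes it below -/
import Mathlib

section
/- Let λ > 0 and μ' > 0 with ρ = λ/μ' satisfying ρ(H_n − H_{n−k}) < 1. Then the Pollaczek–Khinchin upper bound on the fork-join mean response time, U(n,k) = (H_n − H_{n−k})/μ' + λ[(H_{n,2} − H_{n−k,2}) + (H_n − H_{n−k})²] / (2μ'²(1 − ρ(H_n − H_{n−k}))), is at least the lower bound L(n,k) = (1/μ')[(H_n − H_{n−k}) + ρ·∑_{j=0}^{k−1} 1/((n−j)(n−j−ρ))], for all 1 ≤ k ≤ n, provided additionally ρ < n−k+1. -/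
open MeasureTheory ProbabilityTheory Finset Filter

/-- `m`-th harmonic number `∑_{j=1}^m 1/j`. -/
noncomputable def H (m : ℕ) : ℝ := ∑ j ∈ Finset.range m, (1 : ℝ) / (j + 1)

/-- Generalized harmonic number `∑_{j=1}^m 1/j²`. -/
noncomputable def H2 (m : ℕ) : ℝ := ∑ j ∈ Finset.range m, (1 : ℝ) / (j + 1) ^ 2

/-- The `k`-th order statistic (k-th smallest value, 1-indexed) of `X 1, ..., X n`. -/
noncomputable def orderStat {Ω : Type*} (n k : ℕ) (X : Fin n → Ω → ℝ) (ω : Ω) : ℝ :=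
  ((List.ofFn fun i => X i ω).mergeSort (· ≤ ·)).getD (k - 1) 0

lemma diff_sum (f : ℕ → ℝ) (n k : ℕ) (hkn : k ≤ n) :
    (∑ i ∈ Finset.range n, f i) - ∑ i ∈ Finset.range (n - k), f i
      = ∑ j ∈ Finset.range k, f (n - 1 - j) := by
  have h1 : (∑ i ∈ Finset.range n, f i)
      = (∑ i ∈ Finset.range (n-k), f i) + ∑ i ∈ Finset.Ico (n-k) n, f i := by
    rw [Finset.sum_range_add_sum_Ico _ (Nat.sub_le n k)]
  rw [h1, add_sub_cancel_left]
  refine Finset.sum_nbij' (fun i => n - 1 - i) (fun j => n - 1 - j) ?_ ?_ ?_ ?_ ?_ <;>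
    intro a ha <;> simp only [Finset.mem_Ico, Finset.mem_range] at * <;>
    first
      | omega
      | (congr 1; omega)

theorem fork_join_upper_ge_lower (n k : ℕ) (hk : 1 ≤ k) (hkn : k ≤ n)
    (lam μ' : ℝ) (hlam : 0 < lam) (hμ' : 0 < μ')
    (ρ : ℝ) (hρ : ρ = lam / μ')
    (hstab : ρ * (H n - H (n - k)) < 1) (hρk : ρ < (n : ℝ) - k + 1) :
    (1 / μ') * ((H n - H (n - k))
        + ρ * ∑ j ∈ Finset.range k, 1 / (((n : ℝ) - j) * ((n : ℝ) - j - ρ)))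
      ≤ (H n - H (n - k)) / μ'
        + lam * ((H2 n - H2 (n - k)) + (H n - H (n - k)) ^ 2)
          / (2 * μ' ^ 2 * (1 - ρ * (H n - H (n - k)))) := by
  have hρ0 : 0 < ρ := by rw [hρ]; positivity
  have hcast : ∀ j ∈ Finset.range k, ((n - 1 - j : ℕ) : ℝ) + 1 = (n : ℝ) - j := by
    intro j hj
    simp only [Finset.mem_range] at hj
    have h1 : (n - 1 - j : ℕ) = n - (j + 1) := by omega
    have h2 : j + 1 ≤ n := by omega
    rw [h1, Nat.cast_sub h2]
    push_cast
    ring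
  -- positivity of denominators
  have hpos : ∀ j ∈ Finset.range k, (0 : ℝ) < (n : ℝ) - j ∧ ρ < (n : ℝ) - j := by
    intro j hj
    simp only [Finset.mem_range] at hj
    have : ((j : ℝ)) ≤ (k : ℝ) - 1 := by
      have : (j : ℝ) + 1 ≤ (k : ℝ) := by exact_mod_cast hj
      linarith
    constructor <;> nlinarith [hρ0]
  have hH : H n - H (n - k) = ∑ j ∈ Finset.range k, (1 : ℝ) / ((n : ℝ) - j) := by
    rw [H, H, diff_sum _ n k hkn]
    exact Finset.sum_congr rfl fun j hj => by rw [hcast j hj]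
  have hH2 : H2 n - H2 (n - k) = ∑ j ∈ Finset.range k, (1 : ℝ) / ((n : ℝ) - j) ^ 2 := by
    rw [H2, H2, diff_sum _ n k hkn]
    exact Finset.sum_congr rfl fun j hj => by rw [hcast j hj]
  set D := ∑ j ∈ Finset.range k, (1 : ℝ) / ((n : ℝ) - j) with hD
  set D2 := ∑ j ∈ Finset.range k, (1 : ℝ) / ((n : ℝ) - j) ^ 2 with hD2
  set S := ∑ j ∈ Finset.range k, (1 : ℝ) / (((n : ℝ) - j) * ((n : ℝ) - j - ρ)) with hS
  rw [hH, hH2]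
  have hstab' : ρ * D < 1 := by rw [hH] at hstab; exact hstab
  have h1ρD : 0 < 1 - ρ * D := by linarith
  -- D2 ≤ D^2
  have hDnn : ∀ j ∈ Finset.range k, (0:ℝ) ≤ 1 / ((n : ℝ) - j) := fun j hj =>
    le_of_lt (by have := (hpos j hj).1; positivity)
  have hD2D : D2 ≤ D ^ 2 := by
    rw [hD2, sq, hD, Finset.mul_sum]
    apply Finset.sum_le_sum
    intro j hj
    have h := (hpos j hj).1
    have hle : (1:ℝ) / ((n : ℝ) - j) ≤ D :=
      Finset.single_le_sum hDnn hj
    calc (1:ℝ) / ((n : ℝ) - j) ^ 2 = (1 / ((n : ℝ) - j)) * (1 / ((n : ℝ) - j)) := by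
          rw [one_div_mul_one_div, ← sq]
      _ ≤ (1 / ((n : ℝ) - j)) * D := by
          apply mul_le_mul_of_nonneg_left hle (hDnn j hj)
      _ = D * (1 / ((n : ℝ) - j)) := by ring
  -- S * (1 - ρD) ≤ D2
  have hSD2 : S * (1 - ρ * D) ≤ D2 := by
    rw [hS, hD2, Finset.sum_mul]
    apply Finset.sum_le_sum
    intro j hj
    obtain ⟨h1, h2⟩ := hpos j hj
    have h3 : 0 < (n : ℝ) - j - ρ := by linarith
    have hle : (1:ℝ) / ((n : ℝ) - j) ≤ D := Finset.single_le_sum hDnn hj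
    rw [div_mul_eq_mul_div, one_mul, div_le_div_iff₀ (by positivity) (by positivity)]
    have : ρ * (1 / ((n : ℝ) - j)) ≤ ρ * D := mul_le_mul_of_nonneg_left hle hρ0.le
    have h4 : ρ / ((n:ℝ) - j) ≤ ρ * D := by rw [div_eq_mul_one_div]; exact this
    have h5 : 1 - ρ * D ≤ 1 - ρ / ((n:ℝ)-j) := by linarith
    have h6 : (1 - ρ / ((n:ℝ)-j)) * ((n:ℝ)-j) = (n:ℝ) - j - ρ := by field_simp
    nlinarith [sq_nonneg ((n:ℝ)-j)]
  have hkey : 2 * (S * (1 - ρ * D)) ≤ D2 + D ^ 2 := by linarith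
  have hlamρ : lam = ρ * μ' := by rw [hρ]; field_simp
  have hSnn : 0 ≤ S := by
    rw [hS]; apply Finset.sum_nonneg; intro j hj
    obtain ⟨h1, h2⟩ := hpos j hj
    have h3 : 0 < (n : ℝ) - j - ρ := by linarith
    positivity
  rw [hlamρ]
  have goal2 : ρ * S / μ' ≤ ρ * μ' * (D2 + D ^ 2) / (2 * μ' ^ 2 * (1 - ρ * D)) := by
    rw [div_le_div_iff₀ hμ' (by positivity)]
    have : ρ * S * (2 * (1 - ρ * D)) ≤ ρ * (D2 + D ^ 2) := by
      nlinarith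
    nlinarith [sq_nonneg μ']
  calc (1 / μ') * (D + ρ * S) = D / μ' + ρ * S / μ' := by ring
    _ ≤ D / μ' + ρ * μ' * (D2 + D ^ 2) / (2 * μ' ^ 2 * (1 - ρ * D)) := by linarith
end

section
/- Let X_1,...,X_n be i.i.d. random variables with mean μ₀ and variance σ² < ∞. Then the expectation of the k-th order statistic satisfies E[X_{(k)}] ≤ μ₀ + σ·√((k−1)/(n−k+1)) for all 1 ≤ k ≤ n. -/
open MeasureTheory ProbabilityTheory Finset Filter

namespace AGaux

lemma sorted_getElem_le {l : List ℝ} (hs : l.Pairwise (· ≤ ·)) {i j : ℕ}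
    (hij : i ≤ j) (hj : j < l.length) : l[i]'(lt_of_le_of_lt hij hj) ≤ l[j] := by
  have := hs.rel_get_of_le (a := ⟨i, lt_of_le_of_lt hij hj⟩) (b := ⟨j, hj⟩) hij
  simpa using this

lemma count_ge_of_sorted {l : List ℝ} (hs : l.Pairwise (· ≤ ·)) {j : ℕ} (hj : j < l.length)
    {t : ℝ} (ht : l[j] = t) :
    l.length - j ≤ l.countP (fun x => decide (t ≤ x)) := by
  calc l.length - j = (l.drop j).length := List.length_drop.symm
    _ = (l.drop j).countP (fun x => decide (t ≤ x)) := by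
        symm
        rw [List.countP_eq_length]
        intro a ha
        rw [List.mem_iff_getElem] at ha
        obtain ⟨i, hi, rfl⟩ := ha
        rw [List.getElem_drop]
        rw [← ht]
        simpa using sorted_getElem_le hs (Nat.le_add_right j i) (by
          have := hi; rw [List.length_drop] at this; omega)
    _ ≤ l.countP (fun x => decide (t ≤ x)) := by
        conv_rhs => rw [← List.take_append_drop j l]
        rw [List.countP_append]; omega

lemma count_lt_of_sorted {l : List ℝ} (hs : l.Pairwise (· ≤ ·)) {j : ℕ} (hj : j < l.length)
    {t : ℝ} (ht : l[j] = t) :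
    l.countP (fun x => decide (x < t)) ≤ j := by
  conv_lhs => rw [← List.take_append_drop j l]
  rw [List.countP_append]
  have h1 : (l.take j).countP (fun x => decide (x < t)) ≤ j := by
    calc _ ≤ (l.take j).length := List.countP_le_length
      _ ≤ j := by simp [List.length_take]
  have h2 : (l.drop j).countP (fun x => decide (x < t)) = 0 := by
    rw [List.countP_eq_zero]
    intro a ha
    rw [List.mem_iff_getElem] at ha
    obtain ⟨i, hi, rfl⟩ := ha
    rw [List.getElem_drop]
    simp only [decide_eq_true_eq, not_lt]
    rw [← ht]
    exact sorted_getElem_le hs (Nat.le_add_right j i) (by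
      have := hi; rw [List.length_drop] at this; omega)
  omega

lemma le_iff_count_of_sorted {l : List ℝ} (hs : l.Pairwise (· ≤ ·)) {j : ℕ} (hj : j < l.length)
    {t : ℝ} (ht : l[j] = t) (c : ℝ) :
    t ≤ c ↔ j + 1 ≤ l.countP (fun x => decide (x ≤ c)) := by
  constructor
  · intro h
    have hcnt : (l.take (j+1)).countP (fun x => decide (x ≤ c)) = (l.take (j+1)).length := by
      rw [List.countP_eq_length]
      intro a ha
      rw [List.mem_iff_getElem] at ha
      obtain ⟨i, hi, rfl⟩ := ha
      rw [List.getElem_take]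
      have hij : i ≤ j := by
        have := hi; rw [List.length_take] at this; omega
      have := le_trans (sorted_getElem_le hs hij hj) (ht ▸ h)
      simpa using this
    have hlen : (l.take (j+1)).length = j + 1 := by
      rw [List.length_take]; omega
    conv_rhs => rw [← List.take_append_drop (j+1) l]
    rw [List.countP_append]
    omega
  · intro h
    by_contra hc
    push_neg at hc
    have h2 : (l.drop j).countP (fun x => decide (x ≤ c)) = 0 := by
      rw [List.countP_eq_zero]
      intro a ha
      rw [List.mem_iff_getElem] at ha
      obtain ⟨i, hi, rfl⟩ := ha
      rw [List.getElem_drop]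
      simp only [decide_eq_true_eq, not_le]
      refine lt_of_lt_of_le hc ?_
      rw [← ht]
      exact sorted_getElem_le hs (Nat.le_add_right j i) (by
        have := hi; rw [List.length_drop] at this; omega)
    have hle := List.countP_le_length (l := l.take j) (p := fun x => decide (x ≤ c))
    have h3 : l.countP (fun x => decide (x ≤ c)) ≤ j := by
      conv_lhs => rw [← List.take_append_drop j l]
      rw [List.countP_append, h2]
      simp only [List.length_take] at hle
      omega
    omega

noncomputable def sortedL {n : ℕ} (y : Fin n → ℝ) : List ℝ := (List.ofFn y).mergeSort (· ≤ ·)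
noncomputable def ostat {n : ℕ} (k : ℕ) (y : Fin n → ℝ) : ℝ := (sortedL y).getD (k-1) 0

lemma sortedL_length {n : ℕ} (y : Fin n → ℝ) : (sortedL y).length = n := by
  rw [sortedL, List.length_mergeSort, List.length_ofFn]

lemma sortedL_sorted {n : ℕ} (y : Fin n → ℝ) : (sortedL y).Pairwise (· ≤ ·) :=
  List.pairwise_mergeSort' (· ≤ ·) _

lemma sortedL_perm {n : ℕ} (y : Fin n → ℝ) : (sortedL y).Perm (List.ofFn y) := List.mergeSort_perm _ _

lemma countP_ofFn {n : ℕ} (y : Fin n → ℝ) (p : ℝ → Bool) :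
    (List.ofFn y).countP p = (Finset.univ.filter (fun i => p (y i) = true)).card := by
  classical
  rw [List.ofFn_eq_map, List.countP_map, List.countP_eq_length_filter]
  rw [Fin.univ_def, Finset.card_def, Finset.filter_val, Multiset.filter_coe, Multiset.coe_card]
  congr 1
  apply List.filter_congr
  intro x _
  simp [Function.comp]

lemma countP_sortedL {n : ℕ} (y : Fin n → ℝ) (p : ℝ → Bool) :
    (sortedL y).countP p = (Finset.univ.filter (fun i => p (y i) = true)).card := by
  rw [(sortedL_perm y).countP_eq, countP_ofFn]

/-- Characterization used for measurability. -/
lemma ostat_le_iff {n k : ℕ} (hk : 1 ≤ k) (hkn : k ≤ n) (y : Fin n → ℝ) (c : ℝ) :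
    ostat k y ≤ c ↔ k ≤ (Finset.univ.filter (fun i => y i ≤ c)).card := by
  classical
  have hj : k - 1 < (sortedL y).length := by rw [sortedL_length]; omega
  have ht : (sortedL y)[k-1] = ostat k y := by
    rw [ostat, List.getD_eq_getElem _ _ hj]
  rw [le_iff_count_of_sorted (sortedL_sorted y) hj ht c, countP_sortedL]
  have h2 : (Finset.univ.filter (fun i => decide (y i ≤ c) = true))
      = (Finset.univ.filter (fun i => y i ≤ c)) := by
    apply Finset.filter_congr; intro i _; simp
  rw [h2]
  omega

lemma ostat_mem {n k : ℕ} (hk : 1 ≤ k) (hkn : k ≤ n) (y : Fin n → ℝ) :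
    ∃ i, y i = ostat k y := by
  have hj : k - 1 < (sortedL y).length := by rw [sortedL_length]; omega
  have ht : (sortedL y)[k-1] = ostat k y := by
    rw [ostat, List.getD_eq_getElem _ _ hj]
  have hmem : ostat k y ∈ sortedL y := ht ▸ List.getElem_mem hj
  rw [(sortedL_perm y).mem_iff, List.mem_ofFn] at hmem
  exact hmem

lemma key_det {n k : ℕ} (hk : 1 ≤ k) (hkn : k ≤ n) (y : Fin n → ℝ) :
    ostat k y ≤ (∑ i, y i) / n +
      Real.sqrt (((k:ℝ)-1)/((n:ℝ)-k+1)) * Real.sqrt ((∑ i, (y i - (∑ j, y j)/n)^2)/n) := by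
  classical
  have hn : 0 < n := lt_of_lt_of_le hk hkn
  set μ : ℝ := (∑ j, y j) / n with hμ
  set Q : ℝ := ∑ i, (y i - μ)^2 with hQdef
  have hQ0 : 0 ≤ Q := Finset.sum_nonneg fun i _ => sq_nonneg _
  set c : ℝ := Real.sqrt (((k:ℝ)-1)/((n:ℝ)-k+1)) with hc
  set s : ℝ := Real.sqrt (Q/n) with hs
  have hcs : 0 ≤ c * s := mul_nonneg (Real.sqrt_nonneg _) (Real.sqrt_nonneg _)
  set t : ℝ := ostat k y with htdef
  by_cases hcase : t ≤ μ
  · linarith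
  push_neg at hcase
  set a : ℝ := t - μ with hadef
  have ha : 0 < a := by simp [hadef]; linarith
  have hj : k - 1 < (sortedL y).length := by rw [sortedL_length]; omega
  have ht : (sortedL y)[k-1] = t := by
    rw [htdef, ostat, List.getD_eq_getElem _ _ hj]
  set A : Finset (Fin n) := Finset.univ.filter (fun i => t ≤ y i) with hAdef
  set B : Finset (Fin n) := Finset.univ.filter (fun i => y i < t) with hBdef
  have hA : n - k + 1 ≤ A.card := by
    have h1 := count_ge_of_sorted (sortedL_sorted y) hj ht
    rw [countP_sortedL, sortedL_length] at h1
    have h2 : (Finset.univ.filter (fun i => decide (t ≤ y i) = true)) = A := by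
      rw [hAdef]; apply Finset.filter_congr; intro i _; simp
    rw [h2] at h1; omega
  have hB : B.card ≤ k - 1 := by
    have h1 := count_lt_of_sorted (sortedL_sorted y) hj ht
    rw [countP_sortedL] at h1
    have h2 : (Finset.univ.filter (fun i => decide (y i < t) = true)) = B := by
      rw [hBdef]; apply Finset.filter_congr; intro i _; simp
    rw [h2] at h1; omega
  have hAB : ∀ f : Fin n → ℝ, (∑ i ∈ A, f i) + (∑ i ∈ B, f i) = ∑ i, f i := by
    intro f
    have hBc : B = Finset.univ.filter (fun i => ¬ t ≤ y i) := by
      rw [hBdef]; apply Finset.filter_congr; intro i _; simp [not_le]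
    rw [hBc]
    exact Finset.sum_filter_add_sum_filter_not _ _ _
  have hsum0 : ∑ i, (y i - μ) = 0 := by
    rw [Finset.sum_sub_distrib, Finset.sum_const, hμ]
    simp
    field_simp
    ring
  set S : ℝ := ∑ i ∈ A, (y i - μ) with hSdef
  set QA : ℝ := ∑ i ∈ A, (y i - μ)^2 with hQA
  set QB : ℝ := ∑ i ∈ B, (y i - μ)^2 with hQB
  have hQspl : Q = QA + QB := (hAB _).symm
  have hQB0 : 0 ≤ QB := Finset.sum_nonneg fun i _ => sq_nonneg _
  set α : ℝ := (A.card : ℝ) with hα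
  set β : ℝ := (B.card : ℝ) with hβ
  set m : ℝ := (n:ℝ) - k + 1 with hm
  set K : ℝ := (k:ℝ) - 1 with hK
  have hm0 : 0 < m := by
    rw [hm]
    have : (k:ℝ) ≤ n := by exact_mod_cast hkn
    linarith
  have hαm : m ≤ α := by
    rw [hα, hm]
    have : ((n - k + 1 : ℕ) : ℝ) ≤ (A.card : ℝ) := by exact_mod_cast hA
    have hcast : ((n - k + 1 : ℕ) : ℝ) = (n:ℝ) - k + 1 := by
      push_cast [Nat.cast_sub hkn]; ring
    linarith [hcast ▸ this]
  have hα0 : 0 < α := lt_of_lt_of_le hm0 hαm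
  have hS1 : α * a ≤ S := by
    have h := Finset.card_nsmul_le_sum A (fun i => y i - μ) a (by
      intro i hi
      rw [hAdef, Finset.mem_filter] at hi
      simp [hadef]; linarith [hi.2])
    rwa [nsmul_eq_mul] at h
  have hS0 : 0 < S := lt_of_lt_of_le (mul_pos hα0 ha) hS1
  have hSB : ∑ i ∈ B, (y i - μ) = -S := by
    have := hAB (fun i => y i - μ)
    rw [hsum0] at this
    linarith [this]
  have hBne : 1 ≤ B.card := by
    by_contra hB0
    push_neg at hB0
    interval_cases h : B.card
    · have : B = ∅ := Finset.card_eq_zero.mp h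
      rw [this] at hSB
      simp at hSB
      linarith
  have hβ1 : (1:ℝ) ≤ β := by rw [hβ]; exact_mod_cast hBne
  have hβK : β ≤ K := by
    rw [hβ, hK]
    have h1 : (B.card : ℝ) ≤ ((k - 1 : ℕ) : ℝ) := by exact_mod_cast hB
    have h2 : ((k - 1 : ℕ) : ℝ) = (k:ℝ) - 1 := by push_cast [Nat.cast_sub hk]; ring
    linarith [h2 ▸ h1]
  have hK1 : (1:ℝ) ≤ K := le_trans hβ1 hβK
  have CS_A : S^2 ≤ α * QA := sq_sum_le_card_mul_sum_sq
  have CS_B : S^2 ≤ β * QB := by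
    have h := sq_sum_le_card_mul_sum_sq (s := B) (f := fun i => y i - μ)
    rwa [hSB, neg_sq] at h
  have hQAb : m * a^2 ≤ QA := by
    have h1 : (α * a)^2 ≤ S^2 := pow_le_pow_left₀ (mul_pos hα0 ha).le hS1 2
    have h2 : α * (α * a^2) ≤ α * QA := by
      calc α * (α * a^2) = (α * a)^2 := by ring
        _ ≤ S^2 := h1
        _ ≤ α * QA := CS_A
    have h3 : α * a^2 ≤ QA := le_of_mul_le_mul_left h2 hα0
    have h4 : m * a^2 ≤ α * a^2 := mul_le_mul_of_nonneg_right hαm (sq_nonneg a)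
    linarith
  have hQBb : m^2 * a^2 ≤ K * QB := by
    have hma : m * a ≤ S :=
      le_trans (mul_le_mul_of_nonneg_right hαm ha.le) hS1
    have h1 : (m * a)^2 ≤ S^2 := pow_le_pow_left₀ (mul_pos hm0 ha).le hma 2
    have h2 : β * QB ≤ K * QB := mul_le_mul_of_nonneg_right hβK hQB0
    calc m^2 * a^2 = (m * a)^2 := by ring
      _ ≤ S^2 := h1
      _ ≤ β * QB := CS_B
      _ ≤ K * QB := h2
  have hN : (n:ℝ) = K + m := by rw [hK, hm]; ring
  have hn0 : (0:ℝ) < n := by exact_mod_cast hn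
  have hfinal : a^2 ≤ (K/m) * (Q/n) := by
    rw [div_mul_div_comm, le_div_iff₀ (by positivity)]
    have e1 : K * (m * a^2) ≤ K * QA := mul_le_mul_of_nonneg_left hQAb (by linarith)
    calc a^2 * (m * (n:ℝ)) = K * (m * a^2) + m^2 * a^2 := by rw [hN]; ring
      _ ≤ K * QA + K * QB := add_le_add e1 hQBb
      _ = K * Q := by rw [hQspl]; ring
  have hac : a ≤ c * s := by
    have h1 : a = Real.sqrt (a^2) := (Real.sqrt_sq ha.le).symm
    have h2 : Real.sqrt (a^2) ≤ Real.sqrt ((K/m) * (Q/n)) := Real.sqrt_le_sqrt hfinal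
    have h3 : Real.sqrt ((K/m) * (Q/n)) = c * s := by
      rw [Real.sqrt_mul (by positivity), hc, hs, hK, hm]
    linarith [h1 ▸ h2, h3 ▸ h2]
  linarith [hac]

lemma orderStat_eq_ostat {Ω : Type*} (n k : ℕ) (X : Fin n → Ω → ℝ) (ω : Ω) :
    orderStat n k X ω = ostat k (fun i => X i ω) := rfl

lemma measurable_orderStat {Ω : Type*} [MeasurableSpace Ω] {n k : ℕ}
    (hk : 1 ≤ k) (hkn : k ≤ n) (X : Fin n → Ω → ℝ) (hmeas : ∀ i, Measurable (X i)) :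
    Measurable (orderStat n k X) := by
  classical
  apply measurable_of_Iic
  intro c
  have hset : orderStat n k X ⁻¹' Set.Iic c
      = {ω | k ≤ (Finset.univ.filter (fun i => X i ω ≤ c)).card} := by
    ext ω
    simp only [Set.mem_preimage, Set.mem_Iic, Set.mem_setOf_eq]
    rw [orderStat_eq_ostat, ostat_le_iff hk hkn]
  rw [hset]
  have hcard : Measurable (fun ω => (Finset.univ.filter (fun i => X i ω ≤ c)).card) := by
    have : (fun ω => (Finset.univ.filter (fun i => X i ω ≤ c)).card)
        = fun ω => ∑ i, if X i ω ≤ c then 1 else 0 := by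
      funext ω
      rw [Finset.card_filter]
    rw [this]
    apply Finset.measurable_sum
    intro i _
    exact Measurable.ite ((hmeas i) measurableSet_Iic) measurable_const measurable_const
  exact hcard (by trivial)

lemma abs_orderStat_le {Ω : Type*} {n k : ℕ} (hk : 1 ≤ k) (hkn : k ≤ n)
    (X : Fin n → Ω → ℝ) (ω : Ω) :
    |orderStat n k X ω| ≤ ∑ i, |X i ω| := by
  obtain ⟨i, hi⟩ := ostat_mem hk hkn (fun j => X j ω)
  rw [orderStat_eq_ostat, ← hi]
  exact Finset.single_le_sum (f := fun j => |X j ω|) (fun j _ => abs_nonneg _) (Finset.mem_univ i)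

end AGaux

theorem arnold_groeneveld_bound
    {Ω : Type*} [MeasurableSpace Ω] (P : Measure Ω) [IsProbabilityMeasure P]
    (n k : ℕ) (hk : 1 ≤ k) (hkn : k ≤ n) (μ₀ σ : ℝ) (hσ : 0 ≤ σ)
    (X : Fin n → Ω → ℝ) (hmeas : ∀ i, Measurable (X i))
    (hindep : iIndepFun X P)
    (hident : ∀ i j, IdentDistrib (X i) (X j) P P)
    (hL2 : ∀ i, MemLp (X i) 2 P)
    (hmean : ∀ i, ∫ ω, X i ω ∂P = μ₀)
    (hvar : ∀ i, variance (X i) P = σ ^ 2) :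
    ∫ ω, orderStat n k X ω ∂P
      ≤ μ₀ + σ * Real.sqrt (((k : ℝ) - 1) / ((n : ℝ) - k + 1)) := by
  classical
  have hn : 0 < n := lt_of_lt_of_le hk hkn
  have hn0 : ((n:ℝ)) ≠ 0 := Nat.cast_ne_zero.mpr hn.ne'
  set c : ℝ := Real.sqrt (((k : ℝ) - 1) / ((n : ℝ) - k + 1)) with hcdef
  have hc0 : 0 ≤ c := Real.sqrt_nonneg _
  set Xbar : Ω → ℝ := fun ω => (∑ i, X i ω) / n with hXbar
  set s2 : Ω → ℝ := fun ω => (∑ i, (X i ω - Xbar ω)^2) / n with hs2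
  set s : Ω → ℝ := fun ω => Real.sqrt (s2 ω) with hsdef
  -- measurability
  have hXbar_meas : Measurable Xbar :=
    (Finset.measurable_sum univ fun i _ => hmeas i).div_const _
  have hs2_meas : Measurable s2 :=
    ((Finset.measurable_sum univ fun i _ => ((hmeas i).sub hXbar_meas).pow_const 2).div_const _)
  have hs_meas : Measurable s := hs2_meas.sqrt
  -- MemLp facts
  have hXbar_L2 : MemLp Xbar 2 P := by
    have h1 : MemLp (fun ω => ∑ i, X i ω) 2 P := by
      have := memLp_finset_sum' (μ := P) (p := 2) univ (fun i (_ : i ∈ univ) => hL2 i)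
      simpa [Finset.sum_fn] using this
    rw [hXbar]
    simpa [div_eq_inv_mul] using h1.const_mul ((n:ℝ)⁻¹)
  have hd_L2 : ∀ i, MemLp (fun ω => X i ω - Xbar ω) 2 P := fun i => by
    have := (hL2 i).sub hXbar_L2
    exact this
  have hs2_int : Integrable s2 P :=
    (integrable_finset_sum univ fun i _ => (hd_L2 i).integrable_sq).div_const _
  have hs2_nonneg : ∀ ω, 0 ≤ s2 ω := fun ω =>
    div_nonneg (Finset.sum_nonneg fun i _ => sq_nonneg _) (Nat.cast_nonneg n)
  have hssq : ∀ ω, s ω ^ 2 = s2 ω := fun ω => Real.sq_sqrt (hs2_nonneg ω)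
  have hs_L2 : MemLp s 2 P := by
    rw [memLp_two_iff_integrable_sq hs_meas.aestronglyMeasurable]
    exact hs2_int.congr (Filter.EventuallyEq.of_eq (funext fun ω => (hssq ω).symm))
  have hs_int : Integrable s P := hs_L2.integrable one_le_two
  have hXint : ∀ i, Integrable (X i) P := fun i => (hL2 i).integrable one_le_two
  have hXbar_int : Integrable Xbar P := hXbar_L2.integrable one_le_two
  -- mean of Xbar
  have hXbar_mean : ∫ ω, Xbar ω ∂P = μ₀ := by
    rw [hXbar]
    rw [integral_div, integral_finset_sum univ fun i _ => hXint i]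
    simp [hmean]
    field_simp
  -- second moments
  have hmom2 : ∀ i, ∫ ω, (X i ω)^2 ∂P = σ^2 + μ₀^2 := by
    intro i
    have hvd := ProbabilityTheory.variance_eq_sub (hL2 i)
    simp only [Pi.pow_apply] at hvd
    rw [hvar i, hmean i] at hvd
    linarith
  have hXbar2 : μ₀^2 ≤ ∫ ω, (Xbar ω)^2 ∂P := by
    have h1 := ProbabilityTheory.variance_nonneg Xbar P
    have h2 := ProbabilityTheory.variance_eq_sub hXbar_L2
    simp only [Pi.pow_apply] at h2
    rw [hXbar_mean] at h2
    linarith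
  -- algebraic identity for s2
  have hs2_eq : ∀ ω, s2 ω = (∑ i, (X i ω)^2)/n - (Xbar ω)^2 := by
    intro ω
    have hsumX : ∑ i, X i ω = n * Xbar ω := by
      rw [hXbar]; field_simp
    have hexp : ∀ i : Fin n, (X i ω - Xbar ω)^2
        = (X i ω)^2 - 2 * Xbar ω * X i ω + Xbar ω ^ 2 := fun i => by ring
    rw [hs2]
    simp only
    rw [Finset.sum_congr rfl (fun i _ => hexp i)]
    rw [Finset.sum_add_distrib, Finset.sum_sub_distrib, ← Finset.mul_sum, hsumX,
      Finset.sum_const, Finset.card_univ, Fintype.card_fin, nsmul_eq_mul]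
    field_simp
    ring
  -- bound on ∫ s2
  have hints2 : ∫ ω, s2 ω ∂P ≤ σ^2 := by
    have hint1 : Integrable (fun ω => (∑ i, (X i ω)^2)/n) P :=
      (integrable_finset_sum univ fun i _ => (hL2 i).integrable_sq).div_const _
    have hint2 : Integrable (fun ω => (Xbar ω)^2) P := hXbar_L2.integrable_sq
    calc ∫ ω, s2 ω ∂P
        = ∫ ω, ((∑ i, (X i ω)^2)/n - (Xbar ω)^2) ∂P := by
          exact integral_congr_ae (Filter.EventuallyEq.of_eq (funext hs2_eq))
      _ = (∑ i, ∫ ω, (X i ω)^2 ∂P)/n - ∫ ω, (Xbar ω)^2 ∂P := by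
          rw [integral_sub hint1 hint2, integral_div,
            integral_finset_sum univ fun i _ => (hL2 i).integrable_sq]
      _ ≤ (∑ i, ∫ ω, (X i ω)^2 ∂P)/n - μ₀^2 := by linarith
      _ = σ^2 := by
          rw [Finset.sum_congr rfl fun i _ => hmom2 i]
          rw [Finset.sum_const, Finset.card_univ, Fintype.card_fin, nsmul_eq_mul]
          field_simp
          ring
  -- ∫ s ≤ σ
  have hEs : ∫ ω, s ω ∂P ≤ σ := by
    have h1 := ProbabilityTheory.variance_nonneg s P
    have h2 := ProbabilityTheory.variance_eq_sub hs_L2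
    simp only [Pi.pow_apply] at h2
    have h3 : ∫ ω, s ω ^ 2 ∂P = ∫ ω, s2 ω ∂P :=
      integral_congr_ae (Filter.EventuallyEq.of_eq (funext hssq))
    have h4 : (∫ ω, s ω ∂P)^2 ≤ σ^2 := by
      rw [h2, h3] at h1
      linarith
    have h5 : 0 ≤ ∫ ω, s ω ∂P := integral_nonneg fun ω => Real.sqrt_nonneg _
    nlinarith
  -- pointwise bound
  have hpw : ∀ ω, orderStat n k X ω ≤ Xbar ω + c * s ω := by
    intro ω
    have h := AGaux.key_det hk hkn (fun i => X i ω)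
    rw [AGaux.orderStat_eq_ostat]
    exact h
  -- integrability of orderStat
  have hOmeas : Measurable (orderStat n k X) := AGaux.measurable_orderStat hk hkn X hmeas
  have hOint : Integrable (orderStat n k X) P := by
    refine Integrable.mono' (integrable_finset_sum univ fun i _ => (hXint i).abs)
      hOmeas.aestronglyMeasurable ?_
    filter_upwards with ω
    simpa [Real.norm_eq_abs] using AGaux.abs_orderStat_le hk hkn X ω
  -- final chain
  calc ∫ ω, orderStat n k X ω ∂P
      ≤ ∫ ω, (Xbar ω + c * s ω) ∂P :=
        integral_mono hOint (hXbar_int.add (hs_int.const_mul c)) hpw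
    _ = μ₀ + c * ∫ ω, s ω ∂P := by
        rw [integral_add hXbar_int (hs_int.const_mul c), hXbar_mean, integral_const_mul]
    _ ≤ μ₀ + c * σ := add_le_add_right (mul_le_mul_of_nonneg_left hEs hc0) _
    _ = μ₀ + σ * c := by ring
end
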